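/- arXiv:0804.1067 — 5 statements merged into one kernel-verified Lean document; each statement's English description precedes it below -/
import Mathlib

section
/- The integral of the moment map satisfies lim_{t→∞} Ψ_x(e^{its}g)/t = λ(g·x; s) for any g ∈ G and s ∈ 𝔨, where λ is the maximal weight. -/
open Filter MeasureTheory intervalIntegral
open scoped Topology

private lemma cesaro_lower (f : ℝ → ℝ) (hf : Monotone f) (c T b : ℝ) (hb : b < f T) :
    ∀ᶠ t in atTop, b < (c + ∫ τ in (0:ℝ)..t, f τ) / t := by
  have hint : ∀ a b : ℝ, IntervalIntegrable f volume a b := fun a b =>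
    (hf.monotoneOn _).intervalIntegrable
  have key : Tendsto (fun t : ℝ => (c + (∫ τ in (0:ℝ)..T, f τ) - T * f T) / t + f T)
      atTop (𝓝 (f T)) := by
    have h0 : Tendsto (fun t : ℝ => (c + (∫ τ in (0:ℝ)..T, f τ) - T * f T) / t)
        atTop (𝓝 0) := tendsto_const_nhds.div_atTop tendsto_id
    simpa using h0.add (tendsto_const_nhds : Tendsto (fun _ : ℝ => f T) atTop (𝓝 (f T)))
  filter_upwards [key.eventually (eventually_gt_nhds hb),
    eventually_ge_atTop T, eventually_gt_atTop 0] with t h1 h2 h3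
  refine h1.trans_le ?_
  rw [div_add' _ _ _ h3.ne']
  have hsplit : (∫ τ in (0:ℝ)..t, f τ)
      = (∫ τ in (0:ℝ)..T, f τ) + ∫ τ in T..t, f τ :=
    (integral_add_adjacent_intervals (hint 0 T) (hint T t)).symm
  have hlow : (t - T) * f T ≤ ∫ τ in T..t, f τ := by
    have := intervalIntegral.integral_mono_on h2 intervalIntegrable_const (hint T t)
      (fun x hx => hf hx.1)
    simpa using this
  exact (div_le_div_iff_of_pos_right h3).2 (by linarith)

private lemma cesaro (f : ℝ → ℝ) (hf : Monotone f) (c : ℝ) (L : EReal)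
    (hL : Tendsto (fun τ => (f τ : EReal)) atTop (𝓝 L)) :
    Tendsto (fun t => (((c + ∫ τ in (0:ℝ)..t, f τ) / t : ℝ) : EReal)) atTop (𝓝 L) := by
  have hint : ∀ a b : ℝ, IntervalIntegrable f volume a b := fun a b =>
    (hf.monotoneOn _).intervalIntegrable
  induction L with
  | bot =>
    exfalso
    have hle : (f 0 : EReal) ≤ ⊥ :=
      ge_of_tendsto hL (eventually_atTop.2
        ⟨0, fun τ hτ => EReal.coe_le_coe_iff.2 (hf hτ)⟩)
    simp at hle
  | coe a =>
    rw [EReal.tendsto_coe]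
    have hra : Tendsto f atTop (𝓝 a) := EReal.tendsto_coe.1 hL
    refine tendsto_order.2 ⟨fun b hb => ?_, fun b hb => ?_⟩
    · obtain ⟨T, hT⟩ := (hra.eventually (eventually_gt_nhds hb)).exists
      exact cesaro_lower f hf c T b hT
    · have hfa : ∀ τ, f τ ≤ a := fun τ => hf.ge_of_tendsto hra τ
      have key : Tendsto (fun t : ℝ => c / t + a) atTop (𝓝 a) := by
        have h0 : Tendsto (fun t : ℝ => c / t) atTop (𝓝 0) :=
          tendsto_const_nhds.div_atTop tendsto_id
        simpa using h0.add (tendsto_const_nhds : Tendsto (fun _ : ℝ => a) atTop (𝓝 a))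
      filter_upwards [key.eventually (eventually_lt_nhds hb), eventually_gt_atTop 0]
        with t h1 h2
      refine lt_of_le_of_lt ?_ h1
      have heq : c / t + a = (c + t * a) / t := by field_simp
      rw [heq]
      gcongr
      have hIa : (∫ τ in (0:ℝ)..t, f τ) ≤ ∫ τ in (0:ℝ)..t, a :=
        intervalIntegral.integral_mono_on h2.le (hint 0 t) intervalIntegrable_const
          (fun τ _ => hfa τ)
      simpa [mul_comm] using hIa
  | top =>
    rw [EReal.tendsto_nhds_top_iff_real]
    intro b
    have : ∀ᶠ τ in atTop, (b : EReal) < (f τ : EReal) :=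
      hL.eventually (eventually_gt_nhds (EReal.coe_lt_top b))
    obtain ⟨T, hT⟩ := this.exists
    have hT' : b < f T := EReal.coe_lt_coe_iff.1 hT
    filter_upwards [cesaro_lower f hf c T b hT'] with t ht
    exact EReal.coe_lt_coe_iff.2 ht

/-- Asymptotics of the integral of the moment map:
`lim_{t→∞} Ψ_x(e^{its} g)/t = λ(g·x; s)`.  Setup: `e s t = e^{its}` is the
imaginary-time one-parameter subgroup of `G`, `Ψ` satisfies the cocycle
formula `Ψ_x(g) + Ψ_{g·x}(h) = Ψ_x(hg)` and
`Ψ_y(e^{its}) = ∫₀^t λ_τ(y;s) dτ` with `λ_τ(y;s) = ⟨μ(e^{iτs}·y),s⟩`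
nondecreasing in `τ`, and `λ(y;s) = lim_{τ→∞} λ_τ(y;s) ∈ ℝ ∪ {∞}` is the
maximal weight. -/
theorem integral_of_momentMap_asymptotics
    {X G 𝔨 : Type*} [Group G] [MulAction G X]
    (e : 𝔨 → ℝ → G) (Ψ : X → G → ℝ) (Λ : X → 𝔨 → ℝ → ℝ) (L : X → 𝔨 → EReal)
    (hcocycle : ∀ (x : X) (g h : G), Ψ x g + Ψ (g • x) h = Ψ x (h * g))
    (hint : ∀ (y : X) (s : 𝔨) (t : ℝ), Ψ y (e s t) = ∫ τ in (0:ℝ)..t, Λ y s τ)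
    (hmono : ∀ (y : X) (s : 𝔨), Monotone (Λ y s))
    (hL : ∀ (y : X) (s : 𝔨),
      Tendsto (fun τ => (↑(Λ y s τ) : EReal)) atTop (𝓝 (L y s)))
    (x : X) (g : G) (s : 𝔨) :
    Tendsto (fun t => (↑(Ψ x (e s t * g) / t) : EReal)) atTop
      (𝓝 (L (g • x) s)) := by
  have key : ∀ t : ℝ, Ψ x (e s t * g) = Ψ x g + ∫ τ in (0:ℝ)..t, Λ (g • x) s τ := by
    intro t
    rw [← hcocycle x g (e s t), hint]
  simp only [key]
  exact cesaro _ (hmono _ _) _ _ (hL _ _)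
end

section
/- If for some g ∈ G and s ∈ 𝔨 the quantity Ψ_x(e^{its}g)/t is bounded uniformly in t > 0, then d_X(e^{its}g·x, x)·t^{−1/2} → 0 as t → ∞. -/
open Filter intervalIntegral MeasureTheory
open scoped Topology

lemma my_interval_cs (n : ℝ → ℝ) (hn : Continuous n) {a b : ℝ} (hab : a ≤ b) :
    (∫ τ in a..b, n τ) ^ 2 ≤ (b - a) * ∫ τ in a..b, (n τ) ^ 2 := by
  rcases eq_or_lt_of_le hab with rfl | hlt
  · simp
  · have hba : (0:ℝ) < b - a := by linarith
    set I := ∫ τ in a..b, n τ with hI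
    set J := ∫ τ in a..b, (n τ) ^ 2 with hJ
    set c : ℝ := I / (b - a) with hc
    have hint : IntervalIntegrable n MeasureTheory.volume a b := hn.intervalIntegrable a b
    have hint2 : IntervalIntegrable (fun τ => (n τ) ^ 2) MeasureTheory.volume a b :=
      (hn.pow 2).intervalIntegrable a b
    have h0 : (0:ℝ) ≤ ∫ τ in a..b, (n τ - c) ^ 2 :=
      intervalIntegral.integral_nonneg hab (fun u _ => sq_nonneg _)
    have hexp : (∫ τ in a..b, (n τ - c) ^ 2)
        = J - (2 * c) * I + (b - a) * c ^ 2 := by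
      have : ∀ τ, (n τ - c) ^ 2 = (n τ) ^ 2 - (2 * c) * n τ + c ^ 2 := fun τ => by ring
      simp only [this]
      rw [intervalIntegral.integral_add ((hint2.sub ((hint.const_mul (2*c))))) intervalIntegrable_const,
        intervalIntegral.integral_sub hint2 (hint.const_mul (2*c)),
        intervalIntegral.integral_const_mul, intervalIntegral.integral_const]
      simp [smul_eq_mul]
      rfl
    rw [hexp] at h0
    have h2 : 0 ≤ (b - a) * (J - 2 * c * I + (b - a) * c ^ 2) := mul_nonneg hba.le h0
    have hcI : (b - a) * c = I := by rw [hc, mul_div_assoc', mul_div_cancel_left₀ _ hba.ne']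
    nlinarith [h2, hcI]


/-- If `Ψ_x(e^{its}g)/t` is bounded uniformly in `t > 0`, then
`d_X(e^{its}g·x, x)·t^{−1/2} → 0` as `t → ∞`.  Setup: `γ(t) = e^{its}g·x`,
`n(τ) = |ξ_s(e^{iτs}g·x)|`, `F(t) = Ψ_x(e^{its}g)`.  The cocycle formula plus
`Ψ_{g·x}(e^{its}) = ∫₀^t ⟨μ(e^{iτs}g·x),s⟩ dτ` and
`⟨μ(e^{iτs}g·x),s⟩ = A + ∫₀^τ n(u)² du` give the hypothesis `hF` (with
`C = Ψ_x(g)`, `A = ⟨μ(g·x),s⟩`); the flow estimate gives `hdist`. -/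
theorem dist_div_sqrt_tendsto_zero_of_psi_bounded
    {X : Type*} [MetricSpace X]
    (x : X) (γ : ℝ → X) (F n : ℝ → ℝ) (C A : ℝ)
    (hn0 : ∀ τ, 0 ≤ n τ) (hncont : Continuous n)
    (hF : ∀ t : ℝ, F t =
      C + ∫ τ in (0:ℝ)..t, (A + ∫ u in (0:ℝ)..τ, (n u) ^ 2))
    (hdist : ∀ t : ℝ, 0 ≤ t →
      dist (γ t) (γ 0) ≤ ∫ τ in (0:ℝ)..t, n τ)
    (hbound : ∃ M : ℝ, ∀ t : ℝ, 0 < t → |F t| / t ≤ M) :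
    Tendsto (fun t => dist (γ t) x / Real.sqrt t) atTop (𝓝 0) := by
  obtain ⟨M, hM⟩ := hbound
  set G : ℝ → ℝ := fun τ => ∫ u in (0:ℝ)..τ, (n u) ^ 2 with hGdef
  have hn2cont : Continuous (fun u => (n u) ^ 2) := hncont.pow 2
  have hn2int : ∀ a b : ℝ, IntervalIntegrable (fun u => (n u) ^ 2) volume a b :=
    fun a b => hn2cont.intervalIntegrable a b
  have hnint : ∀ a b : ℝ, IntervalIntegrable n volume a b :=
    fun a b => hncont.intervalIntegrable a b
  have hGcont : Continuous G := intervalIntegral.continuous_primitive (fun a b => hn2int a b) 0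
  have hGint : ∀ a b : ℝ, IntervalIntegrable G volume a b :=
    fun a b => hGcont.intervalIntegrable a b
  have hGadd : ∀ a b : ℝ, G b - G a = ∫ u in a..b, (n u) ^ 2 := by
    intro a b
    have := intervalIntegral.integral_add_adjacent_intervals (hn2int 0 a) (hn2int a b)
    simp only [hGdef]
    linarith [this]
  have hGmono : ∀ a b : ℝ, a ≤ b → G a ≤ G b := by
    intro a b hab
    have h := hGadd a b
    have : 0 ≤ ∫ u in a..b, (n u) ^ 2 :=
      intervalIntegral.integral_nonneg hab (fun u _ => sq_nonneg _)
    linarith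
  have hG0 : ∀ t : ℝ, 0 ≤ t → 0 ≤ G t := by
    intro t ht
    have : G 0 = 0 := by simp [hGdef]
    have := hGmono 0 t ht
    linarith
  -- integral of G
  have hFG : ∀ t : ℝ, ∫ τ in (0:ℝ)..t, G τ = F t - C - A * t := by
    intro t
    have h1 : (∫ τ in (0:ℝ)..t, (A + G τ)) = A * t + ∫ τ in (0:ℝ)..t, G τ := by
      rw [intervalIntegral.integral_add intervalIntegrable_const (hGint 0 t)]
      simp [smul_eq_mul, mul_comm]
    have h2 := hF t
    simp only [hGdef] at h1 h2 ⊢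
    linarith
  -- uniform bound on G
  set K : ℝ := 2 * M + |C| + 2 * |A| with hKdef
  have hK : ∀ t : ℝ, 0 ≤ t → G t ≤ K := by
    intro t ht
    have key : ∀ s : ℝ, 1 ≤ s → G s ≤ K := by
      intro s hs
      have hs0 : (0:ℝ) < s := by linarith
      have h2s : (0:ℝ) < 2 * s := by linarith
      have hsplit : ∫ τ in (0:ℝ)..(2*s), G τ =
          (∫ τ in (0:ℝ)..s, G τ) + ∫ τ in s..(2*s), G τ :=
        (intervalIntegral.integral_add_adjacent_intervals (hGint 0 s) (hGint s (2*s))).symm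
      have hlow : s * G s ≤ ∫ τ in s..(2*s), G τ := by
        have := intervalIntegral.integral_mono_on (by linarith : s ≤ 2*s)
          intervalIntegrable_const (hGint s (2*s))
          (fun u hu => hGmono s u hu.1)
        rw [intervalIntegral.integral_const, smul_eq_mul] at this
        have heq : (2*s - s) * G s = s * G s := by ring
        linarith [this, heq.symm.le, heq.le]
      have hpos : 0 ≤ ∫ τ in (0:ℝ)..s, G τ :=
        intervalIntegral.integral_nonneg hs0.le (fun u hu => hG0 u hu.1)
      have hFb : F (2*s) ≤ M * (2*s) := by
        have := hM (2*s) h2s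
        have habs : |F (2*s)| ≤ M * (2*s) := by
          rw [div_le_iff₀ h2s] at this; linarith
        exact le_trans (le_abs_self _) habs
      have : s * G s ≤ F (2*s) - C - A * (2*s) := by
        rw [← hFG (2*s)] at *
        linarith [hsplit, hlow, hpos]
      have hub : s * G s ≤ (2*M + |C| + 2*|A|) * s := by
        have h1 : -C ≤ |C| := neg_le_abs C
        have h2 : -(A * (2*s)) ≤ 2*|A| * s := by
          have : -(A) ≤ |A| := neg_le_abs A
          nlinarith [abs_nonneg A]
        have h3 : |C| ≤ |C| * s := le_mul_of_one_le_right (abs_nonneg C) hs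
        nlinarith
      have hub' : s * G s ≤ s * K := by rw [hKdef]; nlinarith
      exact (mul_le_mul_iff_right₀ hs0).mp hub'
    rcases le_total t 1 with h | h
    · exact le_trans (hGmono t 1 h) (key 1 le_rfl)
    · exact key t h
  -- tail estimate via sup
  set S : Set ℝ := G '' Set.Ici 0 with hSdef
  have hSne : S.Nonempty := ⟨G 0, Set.mem_image_of_mem G Set.self_mem_Ici⟩
  have hSbdd : BddAbove S := ⟨K, by rintro _ ⟨u, hu, rfl⟩; exact hK u hu⟩
  have htail : ∀ ε : ℝ, 0 < ε → ∃ t₀ : ℝ, 0 ≤ t₀ ∧ ∀ t : ℝ, t₀ ≤ t → G t - G t₀ ≤ ε := by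
    intro ε hε
    obtain ⟨_, ⟨t₀, ht₀, rfl⟩, hlt⟩ := exists_lt_of_lt_csSup hSne
      (by linarith : sSup S - ε < sSup S)
    refine ⟨t₀, ht₀, fun t ht => ?_⟩
    have : G t ≤ sSup S := le_csSup hSbdd ⟨t, le_trans ht₀ ht, rfl⟩
    linarith
  -- final
  rw [Metric.tendsto_atTop]
  intro ε hε
  obtain ⟨t₀, ht₀, htl⟩ := htail (ε^2/16) (by positivity)
  set D : ℝ := dist (γ 0) x + ∫ τ in (0:ℝ)..t₀, n τ with hDdef
  have hN0 : 0 ≤ ∫ τ in (0:ℝ)..t₀, n τ :=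
    intervalIntegral.integral_nonneg ht₀ (fun u _ => hn0 u)
  have hD0 : 0 ≤ D := add_nonneg dist_nonneg hN0
  refine ⟨max (max t₀ 1) ((4*D/ε)^2), fun t ht => ?_⟩
  have ht1 : (1:ℝ) ≤ t := le_trans (le_trans (le_max_right _ _) (le_max_left _ _)) ht
  have htt₀ : t₀ ≤ t := le_trans (le_trans (le_max_left _ _) (le_max_left _ _)) ht
  have ht0 : (0:ℝ) ≤ t := by linarith
  have hst : (1:ℝ) ≤ Real.sqrt t := by
    rw [show (1:ℝ) = Real.sqrt 1 by simp]
    exact Real.sqrt_le_sqrt ht1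
  have hstpos : (0:ℝ) < Real.sqrt t := by linarith
  -- tail integral bound
  have hsq : (∫ τ in t₀..t, n τ) ^ 2 ≤ t * (ε^2/16) := by
    have h1 := my_interval_cs n hncont htt₀
    have h2 : (∫ u in t₀..t, (n u) ^ 2) = G t - G t₀ := (hGadd t₀ t).symm
    have h3 : G t - G t₀ ≤ ε^2/16 := htl t htt₀
    have h4 : 0 ≤ G t - G t₀ := by linarith [hGmono t₀ t htt₀]
    nlinarith [h1, h3, h4, mul_nonneg ht₀ h4, mul_le_mul_of_nonneg_left h3 ht0]
  have hnn : 0 ≤ ∫ τ in t₀..t, n τ :=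
    intervalIntegral.integral_nonneg htt₀ (fun u _ => hn0 u)
  have htn : (∫ τ in t₀..t, n τ) ≤ Real.sqrt t * (ε/4) := by
    have heq : Real.sqrt t * (ε/4) = Real.sqrt (t * (ε^2/16)) := by
      rw [Real.sqrt_mul ht0, show ε^2/16 = (ε/4)^2 by ring,
        Real.sqrt_sq (by positivity)]
    rw [heq]
    exact (Real.le_sqrt hnn (by positivity)).mpr hsq
  have hsplitn : (∫ τ in (0:ℝ)..t, n τ) = (∫ τ in (0:ℝ)..t₀, n τ) + ∫ τ in t₀..t, n τ :=
    (intervalIntegral.integral_add_adjacent_intervals (hnint 0 t₀) (hnint t₀ t)).symm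
  have hd : dist (γ t) x ≤ D + Real.sqrt t * (ε/4) := by
    calc dist (γ t) x ≤ dist (γ t) (γ 0) + dist (γ 0) x := dist_triangle _ _ _
      _ ≤ (∫ τ in (0:ℝ)..t, n τ) + dist (γ 0) x := by linarith [hdist t ht0]
      _ ≤ D + Real.sqrt t * (ε/4) := by rw [hsplitn, hDdef]; linarith
  have hDs : D ≤ Real.sqrt t * (ε/4) := by
    have h1 : (4*D/ε) ≤ Real.sqrt t := by
      have h2 : Real.sqrt ((4*D/ε)^2) ≤ Real.sqrt t :=
        Real.sqrt_le_sqrt (le_trans (le_max_right _ _) ht)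
      calc 4*D/ε ≤ |4*D/ε| := le_abs_self _
        _ = Real.sqrt ((4*D/ε)^2) := (Real.sqrt_sq_eq_abs _).symm
        _ ≤ Real.sqrt t := h2
    calc D = (ε/4) * (4*D/ε) := by field_simp
      _ ≤ (ε/4) * Real.sqrt t := mul_le_mul_of_nonneg_left h1 (by positivity)
      _ = Real.sqrt t * (ε/4) := by ring
  have hfin : dist (γ t) x / Real.sqrt t ≤ ε/2 := by
    rw [div_le_iff₀ hstpos]; nlinarith
  rw [Real.dist_eq, sub_zero, abs_of_nonneg (by positivity)]
  linarith
end

section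
/- For K = U(n), G = GL(n,ℂ), s ∈ 𝔲(n) with is having eigenvalues λ₁ < … < λ_r and eigenspaces V_j, and g ∈ G, define V_j^∞ = (g⁻¹(V₁⊕…⊕V_{j−1}))^⊥ ∩ g⁻¹(V₁⊕…⊕V_j). Then ℂⁿ = ⊕_j V_j^∞ is a direct sum decomposition. -/
open Submodule in
/-- Auxiliary: given two families `P W` of subspaces of a finite-dimensional inner
product space with `P j ≤ W j`, `W i ≤ P j` for `i < j`, `P j ≤ ⨆_{i<j} W i`, and
`⨆ W = ⊤`, the family `(P j)ᗮ ⊓ W j` is an internal direct sum decomposition. -/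
theorem vinf_aux {E : Type*} [NormedAddCommGroup E] [InnerProductSpace ℂ E]
    [FiniteDimensional ℂ E] {r : ℕ} (P W : Fin r → Submodule ℂ E)
    (hPW : ∀ j, P j ≤ W j) (hWP : ∀ i j, i < j → W i ≤ P j)
    (hP : ∀ j, P j ≤ ⨆ i, ⨆ _ : i < j, W i) (htop : ⊤ ≤ ⨆ j, W j) :
    DirectSum.IsInternal (fun j => (P j)ᗮ ⊓ W j) := by
  classical
  set F : Fin r → Submodule ℂ E := fun j => (P j)ᗮ ⊓ W j with hF
  have horth : OrthogonalFamily ℂ (fun j => ↥(F j)) fun j => (F j).subtypeₗᵢ := by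
    intro i j hij v w
    rcases lt_or_gt_of_ne hij with h | h
    · have hv : (v : E) ∈ P j := hWP i j h v.2.2
      have hw : (w : E) ∈ (P j)ᗮ := w.2.1
      simpa using (Submodule.mem_orthogonal (P j) (w : E)).mp hw v hv
    · have hw : (w : E) ∈ P i := hWP j i h w.2.2
      have hv : (v : E) ∈ (P i)ᗮ := v.2.1
      exact (Submodule.mem_orthogonal' (P i) (v : E)).mp hv w hw
  have key' : ∀ m : ℕ, ∀ j : Fin r, (j : ℕ) < m → W j ≤ ⨆ k, F k := by
    intro m
    induction m with
    | zero => intro j hj; omega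
    | succ m ih =>
      intro j hj
      have hPj : P j ≤ ⨆ k, F k :=
        (hP j).trans (iSup_le fun i => iSup_le fun hi =>
          ih i (by have h1 := Fin.lt_iff_val_lt_val.mp hi; omega))
      calc W j = P j ⊔ ((P j)ᗮ ⊓ W j) :=
            (Submodule.sup_orthogonal_inf_of_hasOrthogonalProjection (hPW j)).symm
        _ ≤ (⨆ k, F k) ⊔ (⨆ k, F k) := sup_le_sup hPj (le_iSup F j)
        _ = ⨆ k, F k := sup_idem _
  have key : ∀ j : Fin r, W j ≤ ⨆ k, F k := fun j => key' r j j.2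
  have htop' : (⨆ k, F k) = ⊤ :=
    top_le_iff.mp (htop.trans (iSup_le fun j => key j))
  exact (DirectSum.isInternal_submodule_iff_iSupIndep_and_iSup_eq_top F).mpr
    ⟨horth.independent, htop'⟩

/-- For `K = U(n)`, `G = GL(n,ℂ)`: let `s ∈ 𝔲(n)`, so that `is` is Hermitian
with eigenvalues `λ₁ < … < λ_r` and eigenspaces `V_j`, and let `g ∈ G`.
With `V_j^∞ = (g⁻¹(V₁⊕…⊕V_{j−1}))^⊥ ∩ g⁻¹(V₁⊕…⊕V_j)`, the family
`(V_j^∞)_j` gives a direct sum decomposition `ℂⁿ = ⊕_j V_j^∞`. -/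
theorem vinf_isInternal
    {n r : ℕ}
    (s : EuclideanSpace ℂ (Fin n) →ₗ[ℂ] EuclideanSpace ℂ (Fin n))
    (hs : LinearMap.IsSymmetric ((Complex.I : ℂ) • s))
    (lam : Fin r → ℝ) (hlam : StrictMono lam)
    (V : Fin r → Submodule ℂ (EuclideanSpace ℂ (Fin n)))
    (hV : ∀ j, V j = Module.End.eigenspace ((Complex.I : ℂ) • s) (lam j : ℂ))
    (hsup : (⨆ j, V j) = ⊤)
    (g : EuclideanSpace ℂ (Fin n) ≃ₗ[ℂ] EuclideanSpace ℂ (Fin n)) :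
    DirectSum.IsInternal (fun j : Fin r =>
      (Submodule.comap (g : EuclideanSpace ℂ (Fin n) →ₗ[ℂ] EuclideanSpace ℂ (Fin n))
          (⨆ i, ⨆ _ : i < j, V i))ᗮ ⊓
        Submodule.comap (g : EuclideanSpace ℂ (Fin n) →ₗ[ℂ] EuclideanSpace ℂ (Fin n))
          (⨆ i, ⨆ _ : i ≤ j, V i)) := by
  have hcomap : ∀ (S : Fin r → Submodule ℂ (EuclideanSpace ℂ (Fin n))) (p : Fin r → Prop),
      Submodule.comap (g : EuclideanSpace ℂ (Fin n) →ₗ[ℂ] EuclideanSpace ℂ (Fin n))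
        (⨆ i, ⨆ _ : p i, S i)
      = ⨆ i, ⨆ _ : p i, Submodule.comap
          (g : EuclideanSpace ℂ (Fin n) →ₗ[ℂ] EuclideanSpace ℂ (Fin n)) (S i) := by
    intro S p
    rw [Submodule.comap_equiv_eq_map_symm, Submodule.map_iSup]
    refine iSup_congr fun i => ?_
    rw [Submodule.map_iSup]
    exact iSup_congr fun _ => (Submodule.comap_equiv_eq_map_symm g _).symm
  refine vinf_aux _ _ ?_ ?_ ?_ ?_
  · exact fun j => Submodule.comap_mono
      (iSup_mono fun i => iSup_le fun h => le_iSup_of_le h.le le_rfl)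
  · exact fun i j hij => Submodule.comap_mono (iSup_le fun k => iSup_le fun hk =>
      le_iSup_of_le k (le_iSup_of_le (lt_of_le_of_lt hk hij) le_rfl))
  · intro j
    rw [hcomap V (· < j)]
    refine iSup_mono fun i => iSup_mono' fun hi => ⟨hi, ?_⟩
    exact Submodule.comap_mono (le_iSup_of_le i (le_iSup_of_le le_rfl le_rfl))
  · have h1 : (⊤ : Submodule ℂ (EuclideanSpace ℂ (Fin n)))
        = Submodule.comap (g : EuclideanSpace ℂ (Fin n) →ₗ[ℂ] EuclideanSpace ℂ (Fin n))
          (⨆ i, ⨆ _ : True, V i) := by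
      rw [show (⨆ i, ⨆ _ : True, V i) = ⨆ i, V i from iSup_congr fun i => iSup_pos trivial,
        hsup, Submodule.comap_top]
    rw [h1, hcomap V (fun _ => True)]
    refine iSup_le fun j => iSup_le fun _ => le_iSup_of_le j ?_
    exact Submodule.comap_mono (le_iSup_of_le j (le_iSup_of_le le_rfl le_rfl))
end

section
/- Suppose x₁, x₂ ∈ μ⁻¹(0) with x₂ = e^{its}·x₁ for some s ∈ 𝔨 and t > 0. Then ξ_s(e^{iτs}·x₁) = 0 for all τ ∈ [0,t], and hence x₂ = x₁. Consequently G·x ∩ μ⁻¹(0) contains at most one K-orbit. -/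
open scoped RealInnerProductSpace

/-- A continuous nonnegative function with zero integral on `[0,t]`, `t > 0`,
vanishes on `[0,t]`. -/
lemma aux_cont_nonneg_integral_zero {g : ℝ → ℝ} (hg : Continuous g)
    (hnn : ∀ τ, 0 ≤ g τ) {t : ℝ} (ht : 0 < t)
    (hint : (∫ τ in (0:ℝ)..t, g τ) = 0) :
    ∀ τ ∈ Set.Icc (0:ℝ) t, g τ = 0 := by
  intro τ₀ hτ₀
  by_contra hne
  have hc : 0 < g τ₀ := lt_of_le_of_ne (hnn τ₀) (Ne.symm hne)
  obtain ⟨δ, hδ, hball⟩ := Metric.continuousAt_iff.mp hg.continuousAt (g τ₀ / 2)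
    (by linarith)
  have hball' : ∀ τ, |τ - τ₀| ≤ δ/2 → g τ₀ / 2 < g τ := by
    intro τ hτ
    have h1 : dist τ τ₀ < δ := by rw [Real.dist_eq]; linarith
    have h2 := hball h1
    rw [Real.dist_eq] at h2
    have := abs_lt.mp h2
    linarith [this.1]
  set a := max 0 (τ₀ - δ/2) with ha
  set b := min t (τ₀ + δ/2) with hb
  have ha0 : 0 ≤ a := le_max_left _ _
  have hbt : b ≤ t := min_le_left _ _
  have haτ : a ≤ τ₀ := max_le hτ₀.1 (by linarith)
  have hτb : τ₀ ≤ b := le_min hτ₀.2 (by linarith)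
  have hab : a < b := by
    rcases eq_or_lt_of_le hτ₀.1 with h0 | h0
    · have haz : a = 0 := max_eq_left (by linarith)
      rw [haz]
      exact lt_min ht (by linarith)
    · exact lt_of_lt_of_le (max_lt h0 (by linarith)) hτb
  -- every point of [a,b] is δ/2-close to τ₀
  have hmid : ∀ τ ∈ Set.Icc a b, g τ₀ / 2 ≤ g τ := by
    intro τ hτ
    refine (hball' τ ?_).le
    have h1 : τ₀ - δ/2 ≤ a := le_max_right _ _
    have h2 : b ≤ τ₀ + δ/2 := min_le_right _ _
    rw [abs_le]
    constructor <;> [linarith [hτ.1]; linarith [hτ.2]]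
  have hgi : ∀ u v : ℝ, IntervalIntegrable g MeasureTheory.volume u v :=
    fun u v => hg.intervalIntegrable u v
  have hsplit : (∫ τ in (0:ℝ)..t, g τ)
      = (∫ τ in (0:ℝ)..a, g τ) + (∫ τ in a..b, g τ) + (∫ τ in b..t, g τ) := by
    rw [intervalIntegral.integral_add_adjacent_intervals (hgi 0 a) (hgi a b),
      intervalIntegral.integral_add_adjacent_intervals (hgi 0 b) (hgi b t)]
  have h1 : 0 ≤ ∫ τ in (0:ℝ)..a, g τ :=
    intervalIntegral.integral_nonneg ha0 (fun τ _ => hnn τ)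
  have h3 : 0 ≤ ∫ τ in b..t, g τ :=
    intervalIntegral.integral_nonneg hbt (fun τ _ => hnn τ)
  have h2 : (b - a) * (g τ₀ / 2) ≤ ∫ τ in a..b, g τ := by
    have := intervalIntegral.integral_mono_on (μ := MeasureTheory.volume)
      hab.le (intervalIntegrable_const (c := g τ₀ / 2)) (hgi a b) hmid
    simpa [intervalIntegral.integral_const, smul_eq_mul, mul_div_assoc] using this
  have hpos : 0 < (b - a) * (g τ₀ / 2) := by
    apply mul_pos <;> linarith
  linarith [hsplit ▸ hint]

/-- If `μ x = 0` and `μ (Φ s t x) = 0` with `0 ≤ t`, then the integrand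
vanishes on `[0,t]` and the flow does not move `x`. -/
lemma aux_flow_fix {X E 𝔨 : Type*} [MetricSpace X] [NormedAddCommGroup E]
    [NormedAddCommGroup 𝔨] [InnerProductSpace ℝ 𝔨]
    (Φ : 𝔨 → ℝ → X → X) (μ : X → 𝔨) (ξ : 𝔨 → X → E)
    (hkey : ∀ (s : 𝔨) (x : X) (t : ℝ),
      ⟪μ (Φ s t x), s⟫ = ⟪μ x, s⟫ + ∫ τ in (0:ℝ)..t, ‖ξ s (Φ s τ x)‖ ^ 2)
    (hcont : ∀ (s : 𝔨) (x : X), Continuous fun τ => ξ s (Φ s τ x))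
    (hlip : ∀ (s : 𝔨) (y : X) (t : ℝ), 0 ≤ t →
      dist (Φ s t y) y ≤ ∫ τ in (0:ℝ)..t, ‖ξ s (Φ s τ y)‖)
    (x : X) (s : 𝔨) (t : ℝ) (ht : 0 ≤ t)
    (hμ1 : μ x = 0) (hμ2 : μ (Φ s t x) = 0) :
    (0 < t → ∀ τ ∈ Set.Icc (0 : ℝ) t, ξ s (Φ s τ x) = 0) ∧ Φ s t x = x := by
  have hzero : 0 < t → ∀ τ ∈ Set.Icc (0 : ℝ) t, ξ s (Φ s τ x) = 0 := by
    intro htpos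
    have hint : (∫ τ in (0:ℝ)..t, ‖ξ s (Φ s τ x)‖ ^ 2) = 0 := by
      have := hkey s x t
      rw [hμ1, hμ2, inner_zero_left] at this
      linarith
    have hv := aux_cont_nonneg_integral_zero ((hcont s x).norm.pow 2)
      (fun τ => sq_nonneg _) htpos hint
    intro τ hτ
    have := hv τ hτ
    simpa [pow_eq_zero_iff, norm_eq_zero] using this
  refine ⟨hzero, ?_⟩
  rcases eq_or_lt_of_le ht with h0 | h0
  · have : (∫ τ in (0:ℝ)..t, ‖ξ s (Φ s τ x)‖) = 0 := by
      rw [← h0, intervalIntegral.integral_same]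
    have hd := (hlip s x t ht).trans this.le
    exact dist_le_zero.mp hd
  · have hiz : (∫ τ in (0:ℝ)..t, ‖ξ s (Φ s τ x)‖) = 0 := by
      have : ∀ τ ∈ Set.uIcc (0:ℝ) t, ‖ξ s (Φ s τ x)‖ = 0 := by
        intro τ hτ
        rw [Set.uIcc_of_le ht] at hτ
        rw [hzero h0 τ hτ, norm_zero]
      rw [intervalIntegral.integral_congr this, intervalIntegral.integral_zero]
    have hd := (hlip s x t ht).trans hiz.le
    exact dist_le_zero.mp hd

/-- If `x₁, x₂ ∈ μ⁻¹(0)` and `x₂ = e^{its}·x₁` (`t > 0`), then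
`ξ_s(e^{iτs}·x₁) = 0` for all `τ ∈ [0,t]` and `x₂ = x₁`.  Consequently
`G·x ∩ μ⁻¹(0)` contains at most one `K`-orbit.  Setup: `Φ s t x = e^{its}·x`,
the key formula `⟨μ(e^{its}·x),s⟩ = ⟨μ(x),s⟩ + ∫₀^t |ξ_s(e^{iτs}·x)|² dτ`,
the flow length estimate `hlip`, the Cartan decomposition `hCartan` relating
points of a `G`-orbit through `K` and an imaginary-time flow, and
`K`-invariance of `μ⁻¹(0)`. -/
theorem momentMap_zero_level_one_K_orbit
    {X E 𝔨 G : Type*} [MetricSpace X] [NormedAddCommGroup E]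
    [NormedAddCommGroup 𝔨] [InnerProductSpace ℝ 𝔨]
    [Group G] [MulAction G X]
    (Φ : 𝔨 → ℝ → X → X) (μ : X → 𝔨) (ξ : 𝔨 → X → E)
    (hkey : ∀ (s : 𝔨) (x : X) (t : ℝ),
      ⟪μ (Φ s t x), s⟫ = ⟪μ x, s⟫ + ∫ τ in (0:ℝ)..t, ‖ξ s (Φ s τ x)‖ ^ 2)
    (hcont : ∀ (s : 𝔨) (x : X), Continuous fun τ => ξ s (Φ s τ x))
    (hlip : ∀ (s : 𝔨) (y : X) (t : ℝ), 0 ≤ t →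
      dist (Φ s t y) y ≤ ∫ τ in (0:ℝ)..t, ‖ξ s (Φ s τ y)‖)
    (K : Subgroup G)
    (hKμ : ∀ k ∈ K, ∀ y : X, μ y = 0 → μ (k • y) = 0)
    (hCartan : ∀ y₁ y₂ : X, (∃ g : G, g • y₁ = y₂) →
      ∃ k ∈ K, ∃ (s : 𝔨) (t : ℝ), 0 ≤ t ∧ Φ s t y₁ = k • y₂)
    (x₁ x₂ : X) (s : 𝔨) (t : ℝ) (ht : 0 < t)
    (hμ1 : μ x₁ = 0) (hμ2 : μ x₂ = 0) (hx2 : Φ s t x₁ = x₂) :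
    (∀ τ ∈ Set.Icc (0 : ℝ) t, ξ s (Φ s τ x₁) = 0) ∧ x₂ = x₁ ∧
      (∀ y₁ y₂ : X, μ y₁ = 0 → μ y₂ = 0 → (∃ g : G, g • y₁ = y₂) →
        ∃ k ∈ K, k • y₁ = y₂) := by
  have hμ2' : μ (Φ s t x₁) = 0 := hx2 ▸ hμ2
  obtain ⟨hz, hfix⟩ := aux_flow_fix Φ μ ξ hkey hcont hlip x₁ s t ht.le hμ1 hμ2'
  refine ⟨hz ht, by rw [← hx2, hfix], ?_⟩
  intro y₁ y₂ h1 h2 hg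
  obtain ⟨k, hk, s', t', ht', hΦ⟩ := hCartan y₁ y₂ hg
  have hμk : μ (k • y₂) = 0 := hKμ k hk y₂ h2
  have hμΦ : μ (Φ s' t' y₁) = 0 := hΦ ▸ hμk
  obtain ⟨_, hfix'⟩ := aux_flow_fix Φ μ ξ hkey hcont hlip y₁ s' t' ht' h1 hμΦ
  have hky : k • y₂ = y₁ := by rw [← hΦ, hfix']
  refine ⟨k⁻¹, K.inv_mem hk, ?_⟩
  rw [← hky, smul_smul, inv_mul_cancel, one_smul]
end

section
/- Let x ∈ X satisfy μ(x) = 0. Then λ(x;s) ≥ 0 for every s ∈ 𝔨, and λ(x;s) = 0 if and only if ξ_s(x) = 0; in particular λ(x;s) = 0 if and only if λ(x;−s) = 0, so x is analytically polystable. -/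
open Filter
open scoped Topology RealInnerProductSpace

/-- If `μ(x) = 0` then `λ(x;s) ≥ 0` for every `s ∈ 𝔨`, and `λ(x;s) = 0` iff
`ξ_s(x) = 0`; in particular `λ(x;s) = 0` iff `λ(x;−s) = 0`, so every vanishing
direction `s` is opposed (via `s ↦ −s`) to another vanishing direction, i.e.
`x` is analytically polystable.  Setup: `Φ s t x = e^{its}·x`, the key formula
`⟨μ(e^{its}·x),s⟩ = ⟨μ(x),s⟩ + ∫₀^t |ξ_s(e^{iτs}·x)|² dτ`, `‖ξ_{−s}‖ = ‖ξ_s‖`,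
points with vanishing fundamental vector field are fixed by the flow (`hfix`),
and `λ(x;s) = L s ∈ ℝ ∪ {∞}` (as an `EReal`) is the limit of
`⟨μ(e^{its}·x),s⟩`. -/
theorem momentMap_zero_implies_polystable
    {X E 𝔨 : Type*} [NormedAddCommGroup E]
    [NormedAddCommGroup 𝔨] [InnerProductSpace ℝ 𝔨]
    (Φ : 𝔨 → ℝ → X → X) (μ : X → 𝔨) (ξ : 𝔨 → X → E)
    (hΦ0 : ∀ (s : 𝔨) (x : X), Φ s 0 x = x)
    (hkey : ∀ (s : 𝔨) (x : X) (t : ℝ),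
      ⟪μ (Φ s t x), s⟫ = ⟪μ x, s⟫ + ∫ τ in (0:ℝ)..t, ‖ξ s (Φ s τ x)‖ ^ 2)
    (hcont : ∀ (s : 𝔨) (x : X), Continuous fun τ => ξ s (Φ s τ x))
    (hξneg : ∀ (s : 𝔨) (y : X), ‖ξ (-s) y‖ = ‖ξ s y‖)
    (hfix : ∀ (s : 𝔨) (y : X), ξ s y = 0 → ∀ t : ℝ, Φ s t y = y)
    (x : X) (hμx : μ x = 0)
    (L : 𝔨 → EReal)
    (hL : ∀ s : 𝔨,
      Tendsto (fun t => (↑(⟪μ (Φ s t x), s⟫) : EReal)) atTop (𝓝 (L s))) :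
    (∀ s : 𝔨, 0 ≤ L s) ∧
      (∀ s : 𝔨, L s = 0 ↔ ξ s x = 0) ∧
      (∀ s : 𝔨, L s = 0 ↔ L (-s) = 0) := by

  have key : ∀ (s : 𝔨) (t : ℝ),
      ⟪μ (Φ s t x), s⟫ = ∫ τ in (0:ℝ)..t, ‖ξ s (Φ s τ x)‖ ^ 2 := by
    intro s t; rw [hkey, hμx, inner_zero_left, zero_add]
  have gcont : ∀ s : 𝔨, Continuous fun τ => ‖ξ s (Φ s τ x)‖ ^ 2 :=
    fun s => (hcont s x).norm.pow 2
  have gint : ∀ (s : 𝔨) (a b : ℝ),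
      IntervalIntegrable (fun τ => ‖ξ s (Φ s τ x)‖ ^ 2) MeasureTheory.volume a b :=
    fun s a b => (gcont s).intervalIntegrable a b
  have fnonneg : ∀ (s : 𝔨) (t : ℝ), 0 ≤ t → 0 ≤ ∫ τ in (0:ℝ)..t, ‖ξ s (Φ s τ x)‖ ^ 2 :=
    fun s t ht => intervalIntegral.integral_nonneg ht (fun τ _ => by positivity)
  have fmono : ∀ (s : 𝔨) (a b : ℝ), a ≤ b →
      (∫ τ in (0:ℝ)..a, ‖ξ s (Φ s τ x)‖ ^ 2) ≤ ∫ τ in (0:ℝ)..b, ‖ξ s (Φ s τ x)‖ ^ 2 := by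
    intro s a b hab
    rw [← intervalIntegral.integral_add_adjacent_intervals (gint s 0 a) (gint s a b)]
    have h0 : 0 ≤ ∫ τ in a..b, ‖ξ s (Φ s τ x)‖ ^ 2 :=
      intervalIntegral.integral_nonneg hab (fun τ _ => by positivity)
    linarith
  have h1 : ∀ s : 𝔨, 0 ≤ L s := by
    intro s
    refine ge_of_tendsto (hL s) ?_
    filter_upwards [eventually_ge_atTop (0:ℝ)] with t ht
    rw [key]
    exact_mod_cast fnonneg s t ht
  have h2 : ∀ s : 𝔨, L s = 0 ↔ ξ s x = 0 := by
    intro s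
    constructor
    · intro hLs
      by_contra h
      have hg0 : 0 < ‖ξ s (Φ s 0 x)‖ ^ 2 := by
        rw [hΦ0]; exact pow_pos (norm_pos_iff.mpr h) 2
      have hev : ∀ᶠ τ in 𝓝 (0:ℝ), 0 < ‖ξ s (Φ s τ x)‖ ^ 2 :=
        ((gcont s).continuousAt).eventually (eventually_gt_nhds hg0)
      obtain ⟨ε, hε, hball⟩ := Metric.eventually_nhds_iff.mp hev
      have hpos : 0 < ∫ τ in (0:ℝ)..(ε/2), ‖ξ s (Φ s τ x)‖ ^ 2 := by
        refine intervalIntegral.intervalIntegral_pos_of_pos_on (gint s 0 (ε/2))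
          (fun τ hτ => hball ?_) (by linarith)
        rw [Real.dist_eq, sub_zero, abs_of_pos hτ.1]
        linarith [hτ.2]
      have hge : (↑(∫ τ in (0:ℝ)..(ε/2), ‖ξ s (Φ s τ x)‖ ^ 2) : EReal) ≤ L s := by
        refine ge_of_tendsto (hL s) ?_
        filter_upwards [eventually_ge_atTop (ε/2)] with t ht
        rw [key]
        exact_mod_cast fmono s (ε/2) t ht
      rw [hLs] at hge
      have : (0:EReal) < ↑(∫ τ in (0:ℝ)..(ε/2), ‖ξ s (Φ s τ x)‖ ^ 2) := by
        exact_mod_cast hpos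
      exact absurd (le_antisymm hge this.le) this.ne'
    · intro h
      have hconst : (fun t => (↑(⟪μ (Φ s t x), s⟫) : EReal)) = fun _ => (0:EReal) := by
        funext t
        rw [hfix s x h t, hμx, inner_zero_left]
        norm_num
      have := hL s
      rw [hconst] at this
      exact tendsto_nhds_unique this tendsto_const_nhds
  refine ⟨h1, h2, fun s => ?_⟩
  rw [h2 s, h2 (-s), ← norm_eq_zero, ← norm_eq_zero (a := ξ (-s) x), hξneg]
end
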